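/- Let ℓ be a prime and p ≠ ℓ an odd prime. Then p is H-irregular if and only if p is B-irregular or ord_p(ℓ²) < (p−1)/2. -/

import Mathlib

open Finset

lemma bernoulli_two_mul_ne_zero {k : ℕ} (hk : k ≠ 0) : (bernoulli (2*k) : ℚ) ≠ 0 := by
  intro h
  have hs := hasSum_zeta_nat hk
  rw [h] at hs
  simp only [Rat.cast_zero, mul_zero, zero_div] at hs
  have h1 := le_hasSum hs 1 (fun j _ => by positivity)
  norm_num at h1

lemma padicNorm_p_pow {p : ℕ} [hp : Fact p.Prime] (n : ℕ) :
    padicNorm p ((p:ℚ)^n) = (p:ℚ)^(-(n:ℤ)) := by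
  induction n with
  | zero => simp
  | succ n ih =>
    rw [pow_succ, padicNorm.mul, ih, padicNorm.padicNorm_p_of_prime,
      ← zpow_neg_one, ← zpow_add₀ (show (p:ℚ) ≠ 0 by exact_mod_cast hp.out.pos.ne')]
    congr 1; push_cast; ring

lemma norm_le_zpow_iff {p : ℕ} [hp : Fact p.Prime] {q : ℚ} (hq : q ≠ 0) {n : ℤ} :
    padicNorm p q ≤ (p:ℚ)^(-n) ↔ n ≤ padicValRat p q := by
  rw [padicNorm.eq_zpow_of_nonzero hq,
    zpow_le_zpow_iff_right₀ (show (1:ℚ) < p by exact_mod_cast hp.out.one_lt), neg_le_neg_iff]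

lemma padicNorm_nat {p : ℕ} [Fact p.Prime] {d : ℕ} (hd : d ≠ 0) :
    padicNorm p (d:ℚ) = (p:ℚ)^(-(padicValNat p d : ℤ)) := by
  rw [padicNorm.eq_zpow_of_nonzero (by exact_mod_cast hd), padicValRat.of_nat]

lemma three_pow_aux (v : ℕ) (hv : 1 ≤ v) : v + 2 ≤ 3^v := by
  induction v with
  | zero => omega
  | succ n ih =>
    rcases Nat.eq_zero_or_pos n with h | h
    · subst h; norm_num
    · have h1 := ih h
      have h2 : 3^(n+1) = 3 * 3^n := by ring
      omega

lemma val_le_aux {p : ℕ} [hp : Fact p.Prime] (hp3 : 3 ≤ p) {d : ℕ} (hd : 2 ≤ d) :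
    (padicValNat p d : ℤ) ≤ (d : ℤ) - 2 := by
  set v := padicValNat p d with hv
  rcases Nat.eq_zero_or_pos v with h | h
  · omega
  · have h1 : p ^ v ∣ d := pow_padicValNat_dvd
    have h2 : p ^ v ≤ d := Nat.le_of_dvd (by omega) h1
    have h3 : 3 ^ v ≤ p ^ v := Nat.pow_le_pow_left hp3 v
    have h4 := three_pow_aux v h
    omega

lemma key_bernoulli {p : ℕ} [hp : Fact p.Prime] (hp3 : 3 ≤ p) :
    ∀ m : ℕ, padicNorm p ((p:ℚ) * bernoulli m - ∑ k ∈ range p, (k:ℚ)^m) ≤ (p:ℚ)⁻¹ := by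
  have hp0 : (p:ℚ) ≠ 0 := by
    have : 0 < p := by omega
    exact_mod_cast this.ne'
  have hpinv1 : (p:ℚ)⁻¹ ≤ 1 := by
    rw [inv_le_one_iff₀]; right; exact_mod_cast by omega
  intro m
  induction m using Nat.strong_induction_on with
  | _ m IH =>
  have hPB : ∀ i, i < m → padicNorm p ((p:ℚ) * bernoulli i) ≤ 1 := by
    intro i him
    have h1 := IH i him
    have h2 : padicNorm p (∑ k ∈ range p, (k:ℚ)^i) ≤ 1 :=
      padicNorm.sum_le' (fun k _ => by
        have hc : ((k:ℚ))^i = ((k^i : ℕ) : ℚ) := by push_cast; ring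
        rw [hc]; exact padicNorm.of_nat _) zero_le_one
    have h3 := padicNorm.nonarchimedean (p := p)
      (q := (p:ℚ)*bernoulli i - ∑ k ∈ range p, (k:ℚ)^i) (r := ∑ k ∈ range p, (k:ℚ)^i)
    rw [sub_add_cancel] at h3
    exact h3.trans (max_le (h1.trans hpinv1) h2)
  rw [sum_range_pow p m, Finset.sum_range_succ]
  have hm1 : ((m:ℚ)+1) ≠ 0 := by positivity
  have htop : bernoulli m * ((m+1).choose m) * (p:ℚ)^(m+1-m) / ((m:ℚ)+1) = (p:ℚ) * bernoulli m := by
    have h1 : (m+1).choose m = m+1 := Nat.choose_succ_self_right m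
    have h2 : m + 1 - m = 1 := by omega
    rw [h1, h2, pow_one]
    field_simp
    push_cast
    ring
  rw [htop]
  have hexp : (p:ℚ)*bernoulli m -
      ((∑ i ∈ range m, bernoulli i * ((m+1).choose i) * (p:ℚ)^(m+1-i) / ((m:ℚ)+1))
        + (p:ℚ)*bernoulli m)
      = -∑ i ∈ range m, bernoulli i * ((m+1).choose i) * (p:ℚ)^(m+1-i) / ((m:ℚ)+1) := by
    ring
  rw [hexp, padicNorm.neg]
  apply padicNorm.sum_le' _ (by positivity)
  intro i hi
  rw [mem_range] at hi
  set d := m + 1 - i with hd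
  have hd2 : 2 ≤ d := by omega
  have hdQ : (d:ℚ) ≠ 0 := by exact_mod_cast (by omega : d ≠ 0)
  have hidnat : (m+1) * m.choose i = (m+1).choose i * d := by
    rw [hd]
    exact (Nat.add_one_mul_choose_eq m i).trans (Nat.choose_succ_right_eq (m+1) i)
  have hid : ((m:ℚ)+1) * (m.choose i : ℚ) = ((m+1).choose i : ℚ) * (d:ℚ) := by
    exact_mod_cast congrArg (Nat.cast (R := ℚ)) hidnat
  have hpow : (p:ℚ)^(m+1-i) = (p:ℚ) * (p:ℚ)^(m-i) := by
    rw [← pow_succ']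
    congr 1; omega
  have hrw : bernoulli i * ((m+1).choose i) * (p:ℚ)^(m+1-i) / ((m:ℚ)+1)
      = (m.choose i : ℚ) * ((p:ℚ) * bernoulli i) * (p:ℚ)^(m-i) / (d:ℚ) := by
    rw [div_eq_div_iff hm1 hdQ, hpow]
    linear_combination (- bernoulli i * (p:ℚ) * (p:ℚ)^(m-i)) * hid
  rw [hrw, padicNorm.div, padicNorm.mul, padicNorm.mul, padicNorm_p_pow,
    padicNorm_nat (by omega : d ≠ 0)]
  have hX : (p:ℚ)^(-((m-i:ℕ):ℤ)) / (p:ℚ)^(-(padicValNat p d : ℤ))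
      = (p:ℚ)^((padicValNat p d : ℤ) - ((m-i:ℕ):ℤ)) := by
    rw [← zpow_sub₀ hp0]
    congr 1; ring
  have hv := val_le_aux hp3 hd2
  have hXle : (p:ℚ)^((padicValNat p d : ℤ) - ((m-i:ℕ):ℤ)) ≤ (p:ℚ)⁻¹ := by
    rw [← zpow_neg_one]
    apply zpow_le_zpow_right₀ (by exact_mod_cast by omega : (1:ℚ) ≤ p)
    omega
  calc padicNorm p (m.choose i : ℚ) * padicNorm p ((p:ℚ) * bernoulli i)
        * (p:ℚ)^(-((m-i:ℕ):ℤ)) / (p:ℚ)^(-(padicValNat p d : ℤ))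
      = (padicNorm p (m.choose i : ℚ) * padicNorm p ((p:ℚ) * bernoulli i))
        * ((p:ℚ)^(-((m-i:ℕ):ℤ)) / (p:ℚ)^(-(padicValNat p d : ℤ))) := by ring
    _ ≤ 1 * ((p:ℚ)^(-((m-i:ℕ):ℤ)) / (p:ℚ)^(-(padicValNat p d : ℤ))) := by
        apply mul_le_mul_of_nonneg_right
        · exact mul_le_one₀ (padicNorm.of_nat _) (padicNorm.nonneg _) (hPB i hi)
        · rw [hX]; positivity
    _ = (p:ℚ)^((padicValNat p d : ℤ) - ((m-i:ℕ):ℤ)) := by rw [one_mul, hX]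
    _ ≤ (p:ℚ)⁻¹ := hXle

lemma sum_pow_norm {p : ℕ} [hp : Fact p.Prime] {m : ℕ} (hm : m < p - 1) :
    padicNorm p (∑ k ∈ range p, (k:ℚ)^m) ≤ (p:ℚ)⁻¹ := by
  haveI : NeZero p := ⟨hp.out.pos.ne'⟩
  have hz : (∑ x : ZMod p, x ^ m) = 0 := by
    apply FiniteField.sum_pow_lt_card_sub_one
    rwa [ZMod.card]
  set T : ℕ := ∑ k ∈ range p, k^m with hT
  have hcast : (∑ k ∈ range p, (k:ℚ)^m) = (T:ℚ) := by rw [hT]; push_cast; rfl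
  have hzT : (T : ZMod p) = 0 := by
    rw [hT]
    push_cast
    rw [← hz]
    refine Finset.sum_nbij' (fun k => (k : ZMod p)) (fun x => x.val) ?_ ?_ ?_ ?_ ?_
    · intro a _; exact Finset.mem_univ _
    · intro a _; rw [Finset.mem_range]; exact ZMod.val_lt a
    · intro a ha; rw [Finset.mem_range] at ha; exact ZMod.val_cast_of_lt ha
    · intro a _; exact ZMod.natCast_zmod_val a
    · intro a _; rfl
  have hdvd : p ∣ T := (ZMod.natCast_eq_zero_iff _ _).mp hzT
  obtain ⟨t, ht⟩ := hdvd
  rw [hcast, ht]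
  push_cast
  rw [padicNorm.mul, padicNorm.padicNorm_p_of_prime]
  have := padicNorm.of_nat (p := p) t
  calc (p:ℚ)⁻¹ * padicNorm p (t:ℚ) ≤ (p:ℚ)⁻¹ * 1 := by
        apply mul_le_mul_of_nonneg_left (padicNorm.of_nat _) (by positivity)
    _ = (p:ℚ)⁻¹ := mul_one _

section Aux
variable {p : ℕ} [hp : Fact p.Prime]

lemma bernoulli_norm_le_one (hp3 : 3 ≤ p) {m : ℕ} (hm : m ≤ p - 3) :
    padicNorm p (bernoulli m) ≤ 1 := by
  have h1 := key_bernoulli hp3 m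
  have h2 := sum_pow_norm (p := p) (m := m) (by omega)
  have h3 : padicNorm p ((p:ℚ) * bernoulli m) ≤ (p:ℚ)⁻¹ := by
    have h4 := padicNorm.nonarchimedean (p := p)
      (q := (p:ℚ)*bernoulli m - ∑ k ∈ range p, (k:ℚ)^m) (r := ∑ k ∈ range p, (k:ℚ)^m)
    rw [sub_add_cancel] at h4
    exact h4.trans (max_le h1 h2)
  rw [padicNorm.mul, padicNorm.padicNorm_p_of_prime] at h3
  have hppos : (0:ℚ) < (p:ℚ)⁻¹ := by
    have : (0:ℚ) < p := by exact_mod_cast (by omega : 0 < p)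
    positivity
  exact le_of_mul_le_mul_left (by rw [mul_one]; exact h3) hppos

lemma bernoulli_val_nonneg (hp3 : 3 ≤ p) {k : ℕ} (hk : 1 ≤ k) (hm : 2*k ≤ p-3) :
    0 ≤ padicValRat p (bernoulli (2*k)) := by
  have hne : (bernoulli (2*k) : ℚ) ≠ 0 := bernoulli_two_mul_ne_zero (by omega)
  have hnorm : padicNorm p (bernoulli (2*k)) ≤ 1 := bernoulli_norm_le_one hp3 hm
  exact (norm_le_zpow_iff hne (n := 0)).mp (by simpa using hnorm)

end Aux


theorem HIrregular_iff' (ℓ p : ℕ) (hℓ : ℓ.Prime) (hp : p.Prime) (hne : p ≠ ℓ)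
    (hodd : Odd p) :
    (∃ k : ℕ, 1 ≤ k ∧ k ≤ (p - 3) / 2 ∧
        1 ≤ padicValRat p ((1 - (ℓ : ℚ) ^ (2 * k)) * bernoulli (2 * k) / (2 * k)))
      ↔ (∃ k : ℕ, 1 ≤ k ∧ k ≤ (p - 3) / 2 ∧ 1 ≤ padicValRat p (bernoulli (2 * k)))
        ∨ orderOf ((ℓ : ZMod p) ^ 2) < (p - 1) / 2 := by
  haveI : Fact p.Prime := ⟨hp⟩
  have hodd' : p % 2 = 1 := Nat.odd_iff.mp hodd
  have hp3 : 3 ≤ p := by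
    have := hp.two_le; omega
  have hℓ0 : (ℓ : ZMod p) ≠ 0 := by
    rw [Ne, ZMod.natCast_eq_zero_iff]
    intro hdvd
    exact hne ((Nat.prime_dvd_prime_iff_eq hp hℓ).mp hdvd)
  set x : ZMod p := (ℓ : ZMod p)^2 with hxdef
  have hx : x ^ ((p-1)/2) = 1 := by
    rw [hxdef, ← pow_mul, (show 2*((p-1)/2) = p-1 by omega)]
    exact ZMod.pow_card_sub_one_eq_one hℓ0
  have horddvd : orderOf x ∣ (p-1)/2 := orderOf_dvd_of_pow_eq_one hx
  have hordpos : 0 < orderOf x :=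
    orderOf_pos_iff.mpr (isOfFinOrder_iff_pow_eq_one.mpr ⟨(p-1)/2, by omega, hx⟩)
  -- basic facts about a = 1 - ℓ^(2k)
  have h4le : ∀ k : ℕ, 1 ≤ k → 4 ≤ ℓ^(2*k) := by
    intro k hk
    calc 4 = 4^1 := by norm_num
      _ ≤ 4^k := Nat.pow_le_pow_right (by norm_num) hk
      _ = 2^(2*k) := by rw [pow_mul]; norm_num
      _ ≤ ℓ^(2*k) := Nat.pow_le_pow_left hℓ.two_le _
  have hcastpow : ∀ k : ℕ, (ℓ:ℚ)^(2*k) = ((ℓ^(2*k) : ℕ) : ℚ) := by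
    intro k; push_cast; ring
  have hane : ∀ k : ℕ, 1 ≤ k → (1 - (ℓ:ℚ)^(2*k)) ≠ 0 := by
    intro k hk h
    rw [hcastpow, sub_eq_zero] at h
    have : (ℓ^(2*k) : ℕ) = 1 := by exact_mod_cast h.symm
    have := h4le k hk
    omega
  have haint : ∀ k : ℕ, 0 ≤ padicValRat p (1 - (ℓ:ℚ)^(2*k)) := by
    intro k
    have hz : ((1 - (ℓ^(2*k)) : ℤ) : ℚ) = 1 - (ℓ:ℚ)^(2*k) := by push_cast; ring
    rw [← hz, padicValRat.of_int]
    positivity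
  have ha1 : ∀ k : ℕ, 1 ≤ k →
      ((1:ℤ) ≤ padicValRat p (1 - (ℓ:ℚ)^(2*k)) ↔ orderOf x ∣ k) := by
    intro k hk
    have hz : ((1 - (ℓ^(2*k)) : ℤ) : ℚ) = 1 - (ℓ:ℚ)^(2*k) := by push_cast; ring
    have hzne : (1 - (ℓ^(2*k)) : ℤ) ≠ 0 := by
      have := h4le k hk
      have : (4:ℤ) ≤ (ℓ:ℤ)^(2*k) := by exact_mod_cast this
      omega
    rw [← hz, padicValRat.of_int]
    rw [show ((1:ℤ) ≤ (padicValInt p (1 - ℓ^(2*k)) : ℤ)) ↔ 1 ≤ padicValInt p (1 - ℓ^(2*k)) by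
      exact_mod_cast Iff.rfl]
    constructor
    · intro h
      have hdvd : (p:ℤ)^1 ∣ (1 - (ℓ:ℤ)^(2*k)) := by
        rw [padicValInt_dvd_iff]
        right
        exact_mod_cast h
      rw [pow_one] at hdvd
      have hz0 : ((1 - (ℓ:ℤ)^(2*k) : ℤ) : ZMod p) = 0 :=
        (ZMod.intCast_zmod_eq_zero_iff_dvd _ _).mpr hdvd
      push_cast at hz0
      rw [sub_eq_zero] at hz0
      rw [orderOf_dvd_iff_pow_eq_one, hxdef, ← pow_mul]
      exact hz0.symm
    · intro h
      rw [orderOf_dvd_iff_pow_eq_one, hxdef, ← pow_mul] at h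
      have hz0 : ((1 - (ℓ:ℤ)^(2*k) : ℤ) : ZMod p) = 0 := by
        push_cast
        rw [sub_eq_zero]
        exact h.symm
      have hdvd := (ZMod.intCast_zmod_eq_zero_iff_dvd _ _).mp hz0
      rw [show ((p:ℤ) = (p:ℤ)^1) by ring, padicValInt_dvd_iff] at hdvd
      rcases hdvd with h0 | h1
      · exact absurd h0 hzne
      · exact h1
  -- valuation of Hnum
  have hval : ∀ k : ℕ, 1 ≤ k → k ≤ (p-3)/2 → bernoulli (2*k) ≠ 0 →
      padicValRat p ((1 - (ℓ:ℚ)^(2*k)) * bernoulli (2*k) / (2*k)) =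
        padicValRat p (1 - (ℓ:ℚ)^(2*k)) + padicValRat p (bernoulli (2*k)) := by
    intro k hk1 hk2 hB
    have ha := hane k hk1
    have hkQ : ((2:ℚ) * k) ≠ 0 := by
      have : (0:ℚ) < k := by exact_mod_cast (by omega : 0 < k)
      positivity
    rw [padicValRat.div (mul_ne_zero ha hB) hkQ, padicValRat.mul ha hB]
    have h2k : padicValRat p ((2:ℚ)*k) = 0 := by
      rw [show ((2:ℚ)*k) = ((2*k : ℕ) : ℚ) by push_cast; ring, padicValRat.of_nat]
      norm_cast
      apply padicValNat.eq_zero_of_not_dvd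
      intro hdvd
      have h1 := Nat.le_of_dvd (by omega) hdvd
      omega
    rw [h2k, sub_zero]
  constructor
  · rintro ⟨k, hk1, hk2, hk⟩
    by_cases hB : 1 ≤ padicValRat p (bernoulli (2*k))
    · exact Or.inl ⟨k, hk1, hk2, hB⟩
    · right
      have hBne : bernoulli (2*k) ≠ 0 := bernoulli_two_mul_ne_zero (by omega)
      rw [hval k hk1 hk2 hBne] at hk
      have ha : 1 ≤ padicValRat p (1 - (ℓ:ℚ)^(2*k)) := by omega
      have hdvd := (ha1 k hk1).mp ha
      have hle : orderOf x ≤ k := Nat.le_of_dvd (by omega) hdvd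
      omega
  · rintro (⟨k, hk1, hk2, hB⟩ | hord)
    · have hBne : bernoulli (2*k) ≠ 0 := bernoulli_two_mul_ne_zero (by omega)
      refine ⟨k, hk1, hk2, ?_⟩
      rw [hval k hk1 hk2 hBne]
      have h0 := haint k
      omega
    · set k := orderOf x with hk
      have hk1 : 1 ≤ k := hordpos
      have hk2 : k ≤ (p-3)/2 := by
        obtain ⟨t, ht⟩ := horddvd
        rcases Nat.lt_or_ge t 2 with h2 | h2
        · interval_cases t <;> omega
        · have h3 : k*2 ≤ k*t := Nat.mul_le_mul_left k h2
          omega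
      have hBne : bernoulli (2*k) ≠ 0 := bernoulli_two_mul_ne_zero (by omega)
      refine ⟨k, hk1, hk2, ?_⟩
      rw [hval k hk1 hk2 hBne]
      have ha : 1 ≤ padicValRat p (1 - (ℓ:ℚ)^(2*k)) := (ha1 k hk1).mpr dvd_rfl
      have hBv : 0 ≤ padicValRat p (bernoulli (2*k)) :=
        bernoulli_val_nonneg hp3 hk1 (by omega)
      omega


/-- `H_{2n} = (1 - ℓ^{2n}) B_{2n} / (2n)`. -/
noncomputable def Hnum (ℓ : ℕ) (n : ℕ) : ℚ :=
  (1 - (ℓ : ℚ) ^ (2 * n)) * bernoulli (2 * n) / (2 * n)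

/-- An odd prime `p` is `B`-irregular if `ν_p(B_{2k}) ≥ 1` for some
`1 ≤ k ≤ (p-3)/2` (so `3` is `B`-regular). -/
def BIrregular (p : ℕ) : Prop :=
  ∃ k : ℕ, 1 ≤ k ∧ k ≤ (p - 3) / 2 ∧ 1 ≤ padicValRat p (bernoulli (2 * k))

/-- An odd prime `p` is `H`-irregular if `ν_p(H_{2k}) ≥ 1` for some
`1 ≤ k ≤ (p-3)/2` (so `3` is `H`-regular). -/
noncomputable def HIrregular (ℓ : ℕ) (p : ℕ) : Prop :=
  ∃ k : ℕ, 1 ≤ k ∧ k ≤ (p - 3) / 2 ∧ 1 ≤ padicValRat p (Hnum ℓ k)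

/-- Let `ℓ` be a prime and `p ≠ ℓ` an odd prime. Then `p` is `H`-irregular iff
`p` is `B`-irregular or `ord_p(ℓ²) < (p-1)/2`. -/
theorem HIrregular_iff (ℓ p : ℕ) (hℓ : ℓ.Prime) (hp : p.Prime) (hne : p ≠ ℓ)
    (hodd : Odd p) :
    HIrregular ℓ p ↔ BIrregular p ∨ orderOf ((ℓ : ZMod p) ^ 2) < (p - 1) / 2 := by
  have := HIrregular_iff' ℓ p hℓ hp hne hodd
  unfold HIrregular Hnum BIrregular
  exact this
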